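/- For any d ≥ 0 and a ≥ 0 there is an isomorphism of FI-modules B_a M(d) ≅ M(a + d) over any commutative ring R. Consequently, if an FI-module V is finitely generated (respectively, generated in degree ≤ d), then B_a V is finitely generated (respectively, generated in degree ≤ a + d). -/

import Mathlib

open CategoryTheory

/-- The category FI: objects are finite sets, morphisms are injections. -/
structure FI : Type 1 where
  carrier : Type
  [fintype : Fintype carrier]
  [decEq : DecidableEq carrier]

namespace FI

instance : CoeSort FI Type := ⟨FI.carrier⟩
attribute [instance] FI.fintype FI.decEq

/-- Build an object of `FI` from a finite type. -/
def of (X : Type) [Fintype X] [DecidableEq X] : FI := ⟨X⟩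

instance : Category FI where
  Hom S T := {f : S.carrier → T.carrier // Function.Injective f}
  id S := ⟨id, fun _ _ h => h⟩
  comp f g := ⟨g.1 ∘ f.1, fun _ _ h => f.2 (g.2 h)⟩
  id_comp _ := rfl
  comp_id _ := rfl
  assoc _ _ _ := rfl

/-- The standard object `[n] = {1, …, n}` of `FI`. -/
def obj' (n : ℕ) : FI := FI.of (Fin n)

end FI

variable {R : Type} [CommRing R]

/-- A sub-FI-module of an FI-module `V` : a collection of submodules compatible
with all the induced maps. -/
structure SubFIModule (V : FI ⥤ ModuleCat R) where
  carrier : ∀ S : FI, Submodule R (V.obj S)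
  map_mem : ∀ {S T : FI} (f : S ⟶ T) (v : V.obj S), v ∈ carrier S → V.map f v ∈ carrier T

/-- An FI-module is finitely generated if finitely many elements are contained in
no proper sub-FI-module. -/
def FIModuleFG (V : FI ⥤ ModuleCat R) : Prop :=
  ∃ (k : ℕ) (n : Fin k → ℕ) (v : ∀ i, V.obj (FI.obj' (n i))),
    ∀ W : SubFIModule V, (∀ i, v i ∈ W.carrier (FI.obj' (n i))) → ∀ S, W.carrier S = ⊤

/-- An FI-module is generated in degree ≤ d if some set of elements of degrees ≤ d
is contained in no proper sub-FI-module. -/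
def FIModuleGenLE (V : FI ⥤ ModuleCat R) (d : ℕ) : Prop :=
  ∃ (ι : Type) (n : ι → ℕ) (_ : ∀ i, n i ≤ d) (v : ∀ i, V.obj (FI.obj' (n i))),
    ∀ W : SubFIModule V, (∀ i, v i ∈ W.carrier (FI.obj' (n i))) → ∀ S, W.carrier S = ⊤

/-- The free FI-module `⊕_{i ∈ ι} M(d_i)` over `R`: it assigns to a finite set `S` the free
`R`-module on the disjoint union over `i ∈ ι` of the sets of injections `[d_i] ↪ S`, with
maps induced by postcomposition. Taking `ι` a one-element set gives the FI-module
`M(d) = R[Hom_FI([d], −)]`. -/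
noncomputable def FreeFIModule (R : Type) [CommRing R] (ι : Type) (ds : ι → ℕ) :
    FI ⥤ ModuleCat R where
  obj S := ModuleCat.of R ((Σ i : ι, (FI.obj' (ds i) ⟶ S)) →₀ R)
  map {S T} g := ModuleCat.ofHom (Finsupp.lmapDomain R R
    (fun p => (⟨p.1, p.2 ≫ g⟩ : Σ i : ι, (FI.obj' (ds i) ⟶ T))))
  map_id := by
    intro S
    exact ModuleCat.hom_ext (Finsupp.lmapDomain_id R R)
  map_comp := by
    intro S T U f g
    exact ModuleCat.hom_ext <| Finsupp.lmapDomain_comp R R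
      (fun p : Σ i : ι, (FI.obj' (ds i) ⟶ S) => (⟨p.1, p.2 ≫ f⟩ : Σ i : ι, (FI.obj' (ds i) ⟶ T)))
      (fun p : Σ i : ι, (FI.obj' (ds i) ⟶ T) => (⟨p.1, p.2 ≫ g⟩ : Σ i : ι, (FI.obj' (ds i) ⟶ U)))

open DirectSum

instance (S T : FI) : DecidableEq (S ⟶ T) :=
  fun f g => decidable_of_iff (f.1 = g.1) (by exact Subtype.ext_iff.symm)

/-- The complement `S − f([a])` of the image of an injection `f : [a] ↪ S`, as an object
of `FI`. -/
def BComplement {a : ℕ} {S : FI} (f : FI.obj' a ⟶ S) : FI :=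
  FI.of {s : S.carrier // ∀ x, f.1 x ≠ s}

/-- The restriction of `g : S ↪ T` to a map `S − f([a]) ↪ T − (g∘f)([a])`. -/
def BRestrict {a : ℕ} {S T : FI} (g : S ⟶ T) (f : FI.obj' a ⟶ S) :
    BComplement f ⟶ BComplement (f ≫ g) :=
  ⟨fun s => ⟨g.1 s.1, fun x h => s.2 x (g.2 h)⟩, by
    intro s t h
    apply Subtype.ext
    exact g.2 (congrArg Subtype.val h)⟩

/-- The ordered negative shift `B_a V` of an FI-module `V`:
`(B_a V)_S = ⊕_{f : [a] ↪ S} V_{S − f([a])}`, an injection `g : S ↪ T` sending the summand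
indexed by `f` to the summand indexed by `g ∘ f` via the restriction of `g`. -/
noncomputable def BFunctor (R : Type) [CommRing R] (a : ℕ) (V : FI ⥤ ModuleCat R) :
    FI ⥤ ModuleCat R where
  obj S := ModuleCat.of R (⨁ f : (FI.obj' a ⟶ S), V.obj (BComplement f))
  map {S T} g :=
    ModuleCat.ofHom <| DirectSum.toModule R (FI.obj' a ⟶ S) _ fun f =>
      (DirectSum.lof R (FI.obj' a ⟶ T) (fun f' => V.obj (BComplement f')) (f ≫ g)).comp
        (V.map (BRestrict g f)).hom
  map_id := by
    intro S
    refine ModuleCat.hom_ext (DirectSum.linearMap_ext R fun f => ?_)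
    ext x
    simp only [ModuleCat.hom_ofHom, ModuleCat.hom_id, ModuleCat.hom_comp, LinearMap.id_coe, id_eq,
      LinearMap.coe_comp, Function.comp_apply, DirectSum.toModule_lof]
    rw [show BRestrict (𝟙 S) f = 𝟙 (BComplement f) from rfl, V.map_id]
    rfl
  map_comp := by
    intro S T U g h
    refine ModuleCat.hom_ext (DirectSum.linearMap_ext R fun f => ?_)
    ext x
    simp only [ModuleCat.hom_ofHom, ModuleCat.hom_id, ModuleCat.hom_comp, LinearMap.id_coe, id_eq,
      LinearMap.coe_comp, Function.comp_apply, DirectSum.toModule_lof]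
    rw [show BRestrict (g ≫ h) f = BRestrict g f ≫ BRestrict h (f ≫ g) from rfl,
      V.map_comp]
    simp only [ModuleCat.hom_comp, LinearMap.coe_comp, Function.comp_apply, DirectSum.toModule_lof]
    rfl

/-- The FI-module `M(d) = R[Hom_FI([d], −)]`. -/
noncomputable def MFI (R : Type) [CommRing R] (d : ℕ) : FI ⥤ ModuleCat R :=
  FreeFIModule R PUnit (fun _ => d)


section Auxiliary

open DirectSum

variable {R : Type} [CommRing R]

theorem lof_transport (V : FI ⥤ ModuleCat R) {a : ℕ} {T U : FI}
    {f f' : FI.obj' a ⟶ T} (hf : f = f')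
    (φ : U ⟶ BComplement f) (φ' : U ⟶ BComplement f')
    (hφ : ∀ z, (φ.1 z).1 = (φ'.1 z).1) (x : V.obj U) :
    DirectSum.lof R (FI.obj' a ⟶ T) (fun f'' => V.obj (BComplement f'')) f (V.map φ x)
      = DirectSum.lof R (FI.obj' a ⟶ T) (fun f'' => V.obj (BComplement f'')) f' (V.map φ' x) := by
  subst hf
  obtain rfl : φ = φ' := Subtype.ext (funext fun z => Subtype.ext (hφ z))
  rfl

theorem BFunctor_map_lof (V : FI ⥤ ModuleCat R) {a : ℕ} {S T : FI} (g : S ⟶ T)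
    (f : FI.obj' a ⟶ S) (x : V.obj (BComplement f)) :
    (BFunctor R a V).map g
      (DirectSum.lof R (FI.obj' a ⟶ S) (fun f' => V.obj (BComplement f')) f x)
      = DirectSum.lof R (FI.obj' a ⟶ T) (fun f' => V.obj (BComplement f')) (f ≫ g)
          (V.map (BRestrict g f) x) := by
  show (DirectSum.toModule R (FI.obj' a ⟶ S) _ fun f' =>
      (DirectSum.lof R (FI.obj' a ⟶ T) (fun f'' => V.obj (BComplement f'')) (f' ≫ g)).comp
        (V.map (BRestrict g f')).hom)
    ((DirectSum.lof R (FI.obj' a ⟶ S) (fun f' => V.obj (BComplement f')) f) x) = _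
  rw [DirectSum.toModule_lof]
  rfl

/-- `[a] ⊔ T` as an object of FI. -/
def sumObj (a : ℕ) (T : FI) : FI := FI.of (Sum (Fin a) T.carrier)

def inlM (a : ℕ) (T : FI) : FI.obj' a ⟶ sumObj a T :=
  ⟨Sum.inl, fun _ _ h => Sum.inl_injective h⟩

def phi0 (a : ℕ) (T : FI) : T ⟶ BComplement (inlM a T) :=
  ⟨fun t => ⟨Sum.inr t, fun x h => Sum.inl_ne_inr h⟩,
   fun s t h => Sum.inr_injective (congrArg Subtype.val h)⟩

def f0 (a m : ℕ) : FI.obj' a ⟶ FI.obj' (a + m) :=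
  ⟨fun x => finSumFinEquiv (Sum.inl x),
   fun x y h => Sum.inl_injective (finSumFinEquiv.injective h)⟩

def psi0 (a m : ℕ) : FI.obj' m ⟶ BComplement (f0 a m) :=
  ⟨fun z => ⟨finSumFinEquiv (Sum.inr z), fun x h => Sum.inl_ne_inr (finSumFinEquiv.injective h)⟩,
   fun y z h => Sum.inr_injective (finSumFinEquiv.injective (congrArg Subtype.val h))⟩

def symmM (a m : ℕ) : FI.obj' (a + m) ⟶ sumObj a (FI.obj' m) :=
  ⟨fun x => finSumFinEquiv.symm x, fun _ _ h => finSumFinEquiv.symm.injective h⟩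

theorem gen_transfer (V : FI ⥤ ModuleCat R) (a : ℕ) {ι : Type} (n : ι → ℕ)
    (v : ∀ i, V.obj (FI.obj' (n i)))
    (hgen : ∀ W : SubFIModule V, (∀ i, v i ∈ W.carrier (FI.obj' (n i))) → ∀ S, W.carrier S = ⊤) :
    ∃ w : ∀ i, (BFunctor R a V).obj (FI.obj' (a + n i)),
      ∀ W : SubFIModule (BFunctor R a V),
        (∀ i, w i ∈ W.carrier (FI.obj' (a + n i))) → ∀ S, W.carrier S = ⊤ := by
  refine ⟨fun i => DirectSum.lof R _ (fun f' => V.obj (BComplement f')) (f0 a (n i))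
      (V.map (psi0 a (n i)) (v i)), ?_⟩
  intro W hw
  -- the pulled back sub-FI-module of V
  set W' : SubFIModule V := {
    carrier := fun T => Submodule.comap (V.map (phi0 a T)).hom
      (Submodule.comap
        (DirectSum.lof R (FI.obj' a ⟶ sumObj a T) (fun f' => V.obj (BComplement f')) (inlM a T))
        (W.carrier (sumObj a T)))
    map_mem := by
      intro T T' g x hx
      simp only [Submodule.mem_comap, LinearMap.coe_comp, LinearMap.comp_apply, Function.comp_apply] at hx ⊢
      have hmapinj : Function.Injective (Sum.map id g.1 : Sum (Fin a) T.carrier → Sum (Fin a) T'.carrier) :=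
        Function.Injective.sumMap (fun _ _ h => h) g.2
      set hmap : sumObj a T ⟶ sumObj a T' := ⟨Sum.map id g.1, hmapinj⟩ with hhmap
      have key := (BFunctor_map_lof V hmap (inlM a T) ((V.map (phi0 a T)) x)) ▸ W.map_mem hmap _ hx
      have hc : V.map (BRestrict hmap (inlM a T)) (V.map (phi0 a T) x)
          = V.map (phi0 a T ≫ BRestrict hmap (inlM a T)) x := by
        rw [V.map_comp]; rfl
      rw [hc] at key
      have ht := lof_transport V (T := sumObj a T') (U := T)
        (f := inlM a T ≫ hmap) (f' := inlM a T')
        (Subtype.ext (funext fun _ => rfl))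
        (phi0 a T ≫ BRestrict hmap (inlM a T)) (g ≫ phi0 a T')
        (fun z => rfl) x
      rw [ht] at key
      have hc2 : V.map (g ≫ phi0 a T') x = V.map (phi0 a T') (V.map g x) := by
        rw [V.map_comp]; rfl
      rw [hc2] at key
      exact key }
  have hWmem : ∀ i, v i ∈ W'.carrier (FI.obj' (n i)) := by
    intro i
    simp only [W', Submodule.mem_comap, LinearMap.coe_comp, LinearMap.comp_apply, Function.comp_apply]
    have key := (BFunctor_map_lof V (symmM a (n i)) (f0 a (n i)) ((V.map (psi0 a (n i))) (v i))) ▸ W.map_mem (symmM a (n i)) _ (hw i)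
    have hc : V.map (BRestrict (symmM a (n i)) (f0 a (n i))) (V.map (psi0 a (n i)) (v i))
        = V.map (psi0 a (n i) ≫ BRestrict (symmM a (n i)) (f0 a (n i))) (v i) := by
      rw [V.map_comp]; rfl
    rw [hc] at key
    have ht := lof_transport V (T := sumObj a (FI.obj' (n i))) (U := FI.obj' (n i))
      (f := f0 a (n i) ≫ symmM a (n i)) (f' := inlM a (FI.obj' (n i)))
      (Subtype.ext (funext fun x => Equiv.symm_apply_apply _ _))
      (psi0 a (n i) ≫ BRestrict (symmM a (n i)) (f0 a (n i))) (phi0 a (FI.obj' (n i)))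
      (fun z => Equiv.symm_apply_apply _ _) (v i)
    rw [ht] at key
    exact key
  have htot := hgen W' hWmem
  intro S
  refine eq_top_iff.mpr fun y _ => ?_
  refine DirectSum.induction_on y (Submodule.zero_mem _) (fun f x => ?_)
    (fun u w hu hw' => Submodule.add_mem _ hu hw')
  rw [← DirectSum.lof_eq_of R]
  have hx : x ∈ W'.carrier (BComplement f) := by rw [htot]; trivial
  simp only [W', Submodule.mem_comap, LinearMap.coe_comp, LinearMap.comp_apply, Function.comp_apply] at hx
  have hmapinj : Function.Injective
      (Sum.elim f.1 Subtype.val : Sum (Fin a) (BComplement f).carrier → S.carrier) := by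
    rintro (u | u) (w | w) h
    · rw [f.2 h]
    · exact absurd h (w.2 u)
    · exact absurd h.symm (u.2 w)
    · rw [Subtype.ext h]
  set hmap : sumObj a (BComplement f) ⟶ S := ⟨Sum.elim f.1 Subtype.val, hmapinj⟩ with hhmap
  have key := (BFunctor_map_lof V hmap (inlM a (BComplement f)) ((V.map (phi0 a (BComplement f))) x)) ▸ W.map_mem hmap _ hx
  have hc : V.map (BRestrict hmap (inlM a (BComplement f))) (V.map (phi0 a (BComplement f)) x)
      = V.map (phi0 a (BComplement f) ≫ BRestrict hmap (inlM a (BComplement f))) x := by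
    rw [V.map_comp]; rfl
  rw [hc] at key
  have ht := lof_transport V (T := S) (U := BComplement f)
    (f := inlM a (BComplement f) ≫ hmap) (f' := f)
    (Subtype.ext (funext fun _ => rfl))
    (phi0 a (BComplement f) ≫ BRestrict hmap (inlM a (BComplement f))) (𝟙 (BComplement f))
    (fun z => rfl) x
  rw [ht, CategoryTheory.Functor.map_id] at key
  exact key

end Auxiliary
section IsoPart

open DirectSum

/-- Combining `f : [a] ↪ S` and `g : [d] ↪ S − f([a])` into an injection `[a+d] ↪ S`. -/
def combineHom {a d : ℕ} {S : FI}
    (p : Σ f : FI.obj' a ⟶ S, (FI.obj' d ⟶ BComplement f)) : FI.obj' (a + d) ⟶ S :=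
  ⟨fun x => Sum.elim p.1.1 (fun z => (p.2.1 z).1) (finSumFinEquiv.symm x), by
    intro x y h
    replace h : Sum.elim p.1.1 (fun z => (p.2.1 z).1) (finSumFinEquiv.symm x)
        = Sum.elim p.1.1 (fun z => (p.2.1 z).1) (finSumFinEquiv.symm y) := h
    apply finSumFinEquiv.symm.injective
    rcases hx : finSumFinEquiv.symm x with u | u <;> rcases hy : finSumFinEquiv.symm y with w | w <;>
      rw [hx, hy] at h
    · rw [p.1.2 h]
    · exact absurd h ((p.2.1 w).2 u)
    · exact absurd h.symm ((p.2.1 u).2 w)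
    · rw [p.2.2 (Subtype.ext h)]⟩

theorem combine_bijective {a d : ℕ} (S : FI) :
    Function.Bijective (combineHom (a := a) (d := d) (S := S)) := by
  constructor
  · rintro ⟨f, g⟩ ⟨f', g'⟩ h
    have hval : ∀ x : Sum (Fin a) (Fin d),
        Sum.elim f.1 (fun z => (g.1 z).1) (finSumFinEquiv.symm (finSumFinEquiv x))
          = Sum.elim f'.1 (fun z => (g'.1 z).1) (finSumFinEquiv.symm (finSumFinEquiv x)) :=
      fun x => congrFun (congrArg Subtype.val h) (finSumFinEquiv x)
    have hf : f = f' := Subtype.ext (funext fun u => by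
      have := hval (Sum.inl u); rwa [Equiv.symm_apply_apply] at this)
    subst hf
    have hg : g = g' := Subtype.ext (funext fun z => Subtype.ext (by
      have := hval (Sum.inr z); rwa [Equiv.symm_apply_apply] at this))
    subst hg; rfl
  · intro h
    refine ⟨⟨⟨fun x => h.1 (finSumFinEquiv (Sum.inl x)),
        fun x y e => Sum.inl_injective (finSumFinEquiv.injective (h.2 e))⟩,
      ⟨fun z => ⟨h.1 (finSumFinEquiv (Sum.inr z)),
          fun x e => Sum.inl_ne_inr (finSumFinEquiv.injective (h.2 e))⟩,
       fun y z e => Sum.inr_injective (finSumFinEquiv.injective (h.2 (congrArg Subtype.val e)))⟩⟩, ?_⟩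
    apply Subtype.ext; funext x
    show Sum.elim _ _ (finSumFinEquiv.symm x) = h.1 x
    exact (congrFun (Sum.elim_comp_inl_inr (h.1 ∘ finSumFinEquiv)) (finSumFinEquiv.symm x)).trans
      (congrArg h.1 (finSumFinEquiv.apply_symm_apply x))

/-- The bijection between pairs `(f, g)` and injections `[a+d] ↪ S`. -/
noncomputable def EOf {a d : ℕ} (S : FI) :
    (Σ f : FI.obj' a ⟶ S, (FI.obj' d ⟶ BComplement f)) ≃ (FI.obj' (a + d) ⟶ S) :=
  Equiv.ofBijective _ (combine_bijective S)

variable (R : Type) [CommRing R]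

noncomputable def isoHom (a d : ℕ) (S : FI) :
    ((BFunctor R a (MFI R d)).obj S) →ₗ[R] ((MFI R (a + d)).obj S) :=
  DirectSum.toModule R (FI.obj' a ⟶ S) _ fun f =>
    Finsupp.lmapDomain R R fun q =>
      (⟨q.1, EOf S ⟨f, q.2⟩⟩ : Σ _ : PUnit, (FI.obj' (a + d) ⟶ S))

noncomputable def auxGen (a d : ℕ) (S : FI)
    (p : Σ f : FI.obj' a ⟶ S, (FI.obj' d ⟶ BComplement f)) :
    R →ₗ[R] (⨁ f : FI.obj' a ⟶ S, (MFI R d).obj (BComplement f)) :=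
  (DirectSum.lof R (FI.obj' a ⟶ S) (fun f => (MFI R d).obj (BComplement f)) p.1).comp
    (Finsupp.lsingle (⟨PUnit.unit, p.2⟩ : Σ _ : PUnit, (FI.obj' d ⟶ BComplement p.1)))

noncomputable def isoInv (a d : ℕ) (S : FI) :
    ((MFI R (a + d)).obj S) →ₗ[R] ((BFunctor R a (MFI R d)).obj S) :=
  Finsupp.lsum R fun q => auxGen R a d S ((EOf S).symm q.2)

theorem iso_hom_inv (a d : ℕ) (S : FI) :
    (isoInv R a d S).comp (isoHom R a d S) = LinearMap.id := by
  refine DirectSum.linearMap_ext R fun f => ?_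
  refine Finsupp.lhom_ext' fun q => ?_
  refine LinearMap.ext_ring ?_
  erw [LinearMap.comp_apply, LinearMap.comp_apply, LinearMap.comp_apply, LinearMap.comp_apply,
    LinearMap.comp_apply, LinearMap.comp_apply]
  simp only [Finsupp.lsingle_apply, LinearMap.id_coe,
    id_eq]
  rw [isoHom]
  erw [DirectSum.toModule_lof]
  erw [Finsupp.lmapDomain_apply, Finsupp.mapDomain_single]
  rw [isoInv]
  erw [Finsupp.lsum_single]
  rw [Equiv.symm_apply_apply]
  rfl

theorem iso_inv_hom (a d : ℕ) (S : FI) :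
    (isoHom R a d S).comp (isoInv R a d S) = LinearMap.id := by
  refine Finsupp.lhom_ext' fun q => ?_
  refine LinearMap.ext_ring ?_
  erw [LinearMap.comp_apply, LinearMap.comp_apply, LinearMap.comp_apply]
  simp only [Finsupp.lsingle_apply, LinearMap.id_coe,
    id_eq]
  rw [isoInv]
  erw [Finsupp.lsum_single]
  rw [auxGen]
  simp only [LinearMap.coe_comp, Function.comp_apply, Finsupp.lsingle_apply]
  rw [isoHom]
  erw [DirectSum.toModule_lof]
  erw [Finsupp.lmapDomain_apply, Finsupp.mapDomain_single]
  have he : EOf S ⟨((EOf S).symm q.2).1, ((EOf S).symm q.2).2⟩ = q.2 :=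
    (EOf S).apply_symm_apply q.2
  rw [he]
  rfl

theorem combine_natural {a d : ℕ} {S T : FI} (g : S ⟶ T) (f : FI.obj' a ⟶ S)
    (k : FI.obj' d ⟶ BComplement f) :
    combineHom (⟨f ≫ g, k ≫ BRestrict g f⟩ : Σ f' : FI.obj' a ⟶ T, (FI.obj' d ⟶ BComplement f'))
      = combineHom ⟨f, k⟩ ≫ g := by
  apply Subtype.ext; funext x
  show Sum.elim (f ≫ g).1 _ (finSumFinEquiv.symm x)
      = g.1 (Sum.elim f.1 _ (finSumFinEquiv.symm x))
  rcases finSumFinEquiv.symm x with u | u <;> rfl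

set_option maxHeartbeats 1000000 in
theorem isoHom_natural (a d : ℕ) {S T : FI} (g : S ⟶ T) :
    (isoHom R a d T).comp ((BFunctor R a (MFI R d)).map g).hom
      = ((MFI R (a + d)).map g).hom.comp (isoHom R a d S) := by
  refine DirectSum.linearMap_ext R fun f => ?_
  refine Finsupp.lhom_ext' fun q => ?_
  refine LinearMap.ext_ring ?_
  erw [LinearMap.comp_apply, LinearMap.comp_apply, LinearMap.comp_apply, LinearMap.comp_apply,
    LinearMap.comp_apply, LinearMap.comp_apply]
  simp only [Finsupp.lsingle_apply]
  erw [BFunctor_map_lof]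
  have h1 : (MFI R d).map (BRestrict g f) (Finsupp.single q (1 : R))
      = Finsupp.single (⟨q.1, q.2 ≫ BRestrict g f⟩
          : Σ _ : PUnit, (FI.obj' d ⟶ BComplement (f ≫ g))) 1 := by
    show Finsupp.lmapDomain R R _ _ = _
    erw [Finsupp.lmapDomain_apply, Finsupp.mapDomain_single]
  rw [h1]
  rw [isoHom, isoHom]
  erw [DirectSum.toModule_lof, DirectSum.toModule_lof]
  show _ = Finsupp.mapDomain
      (fun p : (Σ _ : PUnit, FI.obj' (a + d) ⟶ S) =>
        (⟨p.1, p.2 ≫ g⟩ : Σ _ : PUnit, FI.obj' (a + d) ⟶ T))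
      (Finsupp.mapDomain
        (fun q' : (Σ _ : PUnit, FI.obj' d ⟶ BComplement f) =>
          (⟨q'.1, EOf S ⟨f, q'.2⟩⟩ : Σ _ : PUnit, FI.obj' (a + d) ⟶ S))
        (Finsupp.single q (1 : R)))
  rw [Finsupp.mapDomain_single, Finsupp.mapDomain_single]
  show Finsupp.mapDomain _ _ = _
  rw [Finsupp.mapDomain_single]
  have h3 : EOf T ⟨f ≫ g, q.2 ≫ BRestrict g f⟩ = EOf S ⟨f, q.2⟩ ≫ g :=
    combine_natural g f q.2
  exact congrArg (fun t => (Finsupp.single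
    (⟨q.1, t⟩ : Σ _ : PUnit, (FI.obj' (a + d) ⟶ T)) (1 : R))) h3

/-- The isomorphism `B_a M(d) ≅ M(a+d)`. -/
noncomputable def BIso (a d : ℕ) : BFunctor R a (MFI R d) ≅ MFI R (a + d) :=
  CategoryTheory.NatIso.ofComponents
    (fun S => (LinearEquiv.ofLinear (isoHom R a d S) (isoInv R a d S)
      (iso_inv_hom R a d S) (iso_hom_inv R a d S)).toModuleIso)
    (fun {S T} g => ModuleCat.hom_ext (isoHom_natural R a d g))

end IsoPart
/-- **Ordered negative shifts of free FI-modules** (Church–Ellenberg–Farb–Nagpal,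
Lemma 2.18 and Corollary 2.19). For any `d, a ≥ 0` there is an isomorphism of FI-modules
`B_a M(d) ≅ M(a + d)`; consequently, if `V` is finitely generated (resp. generated in
degree ≤ d) then `B_a V` is finitely generated (resp. generated in degree ≤ a + d). -/
theorem BFunctor_of_free_and_generation
    (R : Type) [CommRing R] (a : ℕ) :
    (∀ d : ℕ, Nonempty (BFunctor R a (MFI R d) ≅ MFI R (a + d))) ∧
    (∀ V : FI ⥤ ModuleCat R,
      (FIModuleFG V → FIModuleFG (BFunctor R a V)) ∧
      (∀ d : ℕ, FIModuleGenLE V d → FIModuleGenLE (BFunctor R a V) (a + d))) := by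
  constructor
  · exact fun d => ⟨BIso R a d⟩
  · intro V
    constructor
    · rintro ⟨k, n, v, h⟩
      obtain ⟨w, hw⟩ := gen_transfer V a n v h
      exact ⟨k, fun i => a + n i, w, hw⟩
    · rintro d ⟨ι, n, hn, v, h⟩
      obtain ⟨w, hw⟩ := gen_transfer V a n v h
      exact ⟨ι, fun i => a + n i, fun i => Nat.add_le_add_left (hn i) a, w, hw⟩
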